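/- Let S be a compact positive operator and A a bounded self-adjoint operator on a complex Hilbert space H, and set K := S ∘ A (so K* = A ∘ S). Given eigen-data (λ_n, f_n, g_n) satisfying the completeness hypothesis, the finite-rank operators Σ_{n<N} λ_n ⟨·, f_n⟩ g_n converge to K in operator norm as N → ∞, and the finite-rank operators Σ_{n<N} λ_n ⟨·, g_n⟩ f_n converge to K* in operator norm as N → ∞. -/

import Mathlib

open ContinuousLinearMap Filter Topology Finset Metric

section AuxLemmas

set_option linter.unusedSectionVars false

variable {H : Type*} [NormedAddCommGroup H] [InnerProductSpace ℂ H] [CompleteSpace H]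

local notation "⟪" x ", " y "⟫" => @inner ℂ _ _ x y

lemma aux_sa_idem_norm_le {P : H →L[ℂ] H} (hsa : IsSelfAdjoint P)
    (hidem : P ∘L P = P) (x : H) : ‖P x‖ ≤ ‖x‖ := by
  have h1 : P (P x) = P x := by rw [← ContinuousLinearMap.comp_apply, hidem]
  have h0 : (⟪P x, P x⟫) = ⟪x, P x⟫ := by
    calc ⟪P x, P x⟫ = ⟪(ContinuousLinearMap.adjoint P) x, P x⟫ := by rw [hsa.adjoint_eq]
    _ = ⟪x, P (P x)⟫ := ContinuousLinearMap.adjoint_inner_left P (P x) x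
    _ = ⟪x, P x⟫ := by rw [h1]
  have h2 : ‖P x‖ ^ 2 ≤ ‖x‖ * ‖P x‖ := by
    rw [← inner_self_eq_norm_sq (𝕜 := ℂ), h0]
    calc (⟪x, P x⟫).re ≤ ‖(⟪x, P x⟫ : ℂ)‖ := Complex.re_le_norm _
    _ ≤ ‖x‖ * ‖P x‖ := norm_inner_le_norm x (P x)
  rcases eq_or_lt_of_le (norm_nonneg (P x)) with h | h
  · rw [← h]; exact norm_nonneg x
  · rw [sq] at h2
    exact le_of_mul_le_mul_right h2 h

lemma aux_adjoint_rank_one (v w : H) :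
    ContinuousLinearMap.adjoint ((innerSL ℂ v).smulRight w) = (innerSL ℂ w).smulRight v := by
  rw [eq_comm, ContinuousLinearMap.eq_adjoint_iff]
  intro x y
  simp only [ContinuousLinearMap.smulRight_apply, innerSL_apply_apply, inner_smul_left,
    inner_smul_right, inner_conj_symm]
  ring

lemma aux_compact_strong {S : H →L[ℂ] H} (hS : IsCompactOperator (⇑S))
    (Q : ℕ → H →L[ℂ] H) (hQ1 : ∀ N x, ‖Q N x‖ ≤ ‖x‖)
    (hQ2 : ∀ x, Tendsto (fun N => Q N x) atTop (𝓝 0)) :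
    Tendsto (fun N => ‖(Q N) ∘L S‖) atTop (𝓝 0) := by
  obtain ⟨C, hC, hCmem⟩ := hS
  obtain ⟨r, hr, hball⟩ := Metric.mem_nhds_iff.mp hCmem
  rw [Metric.tendsto_atTop]
  intro ε hε
  set δ : ℝ := ε * r / 8 with hδdef
  have hδ : 0 < δ := by positivity
  have htb : TotallyBounded (⇑S '' Metric.ball 0 r) :=
    (hC.totallyBounded).subset (Set.image_subset_iff.mpr hball)
  obtain ⟨t, htfin, htsub⟩ := totallyBounded_iff.mp htb δ hδ
  have hev : ∀ᶠ N in atTop, ∀ y ∈ t, ‖Q N y‖ < δ := by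
    rw [Filter.eventually_all_finite htfin]
    intro y _
    have := (hQ2 y).norm
    rw [show ‖(0 : H)‖ = 0 from norm_zero] at this
    exact (this.eventually_lt_const hδ)
  rw [eventually_atTop] at hev
  obtain ⟨N₀, hN₀⟩ := hev
  refine ⟨N₀, fun N hN => ?_⟩
  have hbd : ‖(Q N) ∘L S‖ ≤ ε / 2 := by
    refine ContinuousLinearMap.opNorm_le_of_shell (ε := r) hr (by positivity) (c := (2 : ℂ))
      (by norm_num) ?_
    intro x hx1 hx2
    have hx : x ∈ Metric.ball (0 : H) r := by
      rwa [Metric.mem_ball, dist_zero_right]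
    obtain ⟨y, hyt, hy⟩ := Set.mem_iUnion₂.mp (htsub ⟨x, hx, rfl⟩)
    rw [Metric.mem_ball, dist_eq_norm] at hy
    have h1 : ‖Q N (S x)‖ ≤ ‖Q N (S x - y)‖ + ‖Q N y‖ := by
      calc ‖Q N (S x)‖ = ‖Q N (S x - y) + Q N y‖ := by rw [← map_add, sub_add_cancel]
      _ ≤ ‖Q N (S x - y)‖ + ‖Q N y‖ := norm_add_le _ _
    have h2 : ‖Q N (S x - y)‖ ≤ ‖S x - y‖ := hQ1 N _
    have h3 : ‖Q N y‖ < δ := hN₀ N hN y hyt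
    have h4 : ‖Q N (S x)‖ < 2 * δ := by linarith
    have h5 : r / 2 ≤ ‖x‖ := by
      rw [show ‖(2:ℂ)‖ = 2 by norm_num] at hx1
      linarith [hx1]
    have : 2 * δ ≤ ε / 2 * ‖x‖ := by
      rw [hδdef]
      nlinarith
    calc ‖((Q N) ∘L S) x‖ = ‖Q N (S x)‖ := rfl
    _ ≤ ε / 2 * ‖x‖ := le_of_lt (lt_of_lt_of_le h4 this)
  rw [Real.dist_eq, sub_zero, abs_of_nonneg (norm_nonneg _)]
  linarith

end AuxLemmas

set_option maxHeartbeats 1000000 in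
/-- Operator-norm convergence of the spectral resolution for a symmetrizable operator
`K = S ∘ A` with `S` compact positive and `A` bounded self-adjoint:
`K = Σ λ_n ⟨·, f_n⟩ g_n` and `K* = Σ λ_n ⟨·, g_n⟩ f_n` in operator norm. -/
theorem stmt6
    {H : Type*} [NormedAddCommGroup H] [InnerProductSpace ℂ H] [CompleteSpace H]
    (S A : H →L[ℂ] H)
    (hS_sa : IsSelfAdjoint S)
    (hS_pos : ∀ x : H, x ≠ 0 → 0 < (inner ℂ (S x) x : ℂ).re)
    (hS_compact : IsCompactOperator (⇑S))
    (hA_sa : IsSelfAdjoint A)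
    -- `R` is the positive square root of `S`
    (R : H →L[ℂ] H)
    (hR_sa : IsSelfAdjoint R)
    (hR_pos : ∀ x : H, 0 ≤ (inner ℂ (R x) x : ℂ).re)
    (hR_sq : R ∘L R = S)
    -- eigen-data for `K = S ∘L A`
    (lam : ℕ → ℝ) (hlam : ∀ n, lam n ≠ 0)
    (f : ℕ → H) (hf : ∀ n, adjoint (S ∘L A) (f n) = (lam n : ℂ) • f n)
    (g : ℕ → H) (hg : ∀ n, g n = S (f n))
    (horth : Orthonormal ℂ (fun n => R (f n)))
    -- completeness hypothesis
    (hcomplete : ∀ x : H, R (adjoint (S ∘L A) x) ∈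
      (Submodule.span ℂ (Set.range fun n => R (f n))).topologicalClosure) :
    Tendsto (fun N => ∑ n ∈ Finset.range N,
        (lam n : ℂ) • (innerSL ℂ (f n)).smulRight (g n)) atTop (𝓝 (S ∘L A)) ∧
    Tendsto (fun N => ∑ n ∈ Finset.range N,
        (lam n : ℂ) • (innerSL ℂ (g n)).smulRight (f n)) atTop (𝓝 (adjoint (S ∘L A))) := by
  classical
  set e : ℕ → H := fun n => R (f n) with he
  set M : Submodule ℂ H := (Submodule.span ℂ (Set.range e)).topologicalClosure with hMdef
  haveI : CompleteSpace M := (Submodule.isClosed_topologicalClosure _).completeSpace_coe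
  -- basic facts
  have hK : adjoint (S ∘L A) = A ∘L S := by
    rw [ContinuousLinearMap.adjoint_comp, hA_sa.adjoint_eq, hS_sa.adjoint_eq]
  have hRinj : ∀ x : H, R x = 0 → x = 0 := by
    intro x hx
    by_contra hne
    have hSx : S x = 0 := by rw [← hR_sq]; simp [ContinuousLinearMap.comp_apply, hx]
    have := hS_pos x hne
    rw [hSx] at this
    simp at this
  have hge : ∀ n, g n = R (e n) := by
    intro n; rw [hg, ← hR_sq]; rfl
  have hAe : ∀ n, A (R (e n)) = (lam n : ℂ) • f n := by
    intro n
    have : R (e n) = S (f n) := by rw [← hR_sq]; rfl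
    rw [this, ← ContinuousLinearMap.comp_apply, ← hK, hf]
  -- orthogonal projection onto M
  obtain ⟨Q, hQdef⟩ : ∃ Q' : H →L[ℂ] H, Q' = M.subtypeL ∘L M.orthogonalProjectionOnto := ⟨_, rfl⟩
  have hQ_sa : IsSelfAdjoint Q := by rw [hQdef]; exact isSelfAdjoint_starProjection M
  have hQmem : ∀ x, Q x ∈ M := by
    intro x; rw [hQdef]; exact (M.orthogonalProjectionOnto x).2
  have hQeq : ∀ v ∈ M, Q v = v := by
    intro v hv
    rw [hQdef]
    exact Submodule.starProjection_eq_self_iff.mpr hv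
  have hQperp : ∀ x : H, x - Q x ∈ Mᗮ := by
    intro x; rw [hQdef]; exact Submodule.sub_starProjection_mem_orthogonal (K := M) x
  have heM : ∀ n, e n ∈ M :=
    fun n => Submodule.le_topologicalClosure _ (Submodule.subset_span ⟨n, rfl⟩)
  -- the symmetrized operator T = R A R
  obtain ⟨T, hTdef⟩ : ∃ T' : H →L[ℂ] H, T' = R * A * R := ⟨_, rfl⟩
  have hT_sa : IsSelfAdjoint T := by
    rw [hTdef]
    have := hA_sa.conjugate R
    rwa [hR_sa.star_eq] at this
  have hTapp : ∀ x, T x = R (A (R x)) := by intro x; rw [hTdef]; rfl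
  -- range of T lies in M
  have hTM : ∀ z : H, T z ∈ M := by
    have hdense : Dense (Set.range (⇑R)) := by
      have horthbot : (LinearMap.range (R : H →ₗ[ℂ] H))ᗮ = ⊥ := by
        rw [Submodule.eq_bot_iff]
        intro u hu
        rw [Submodule.mem_orthogonal] at hu
        have h1 : (inner ℂ (R (R u)) u : ℂ) = 0 := hu _ (LinearMap.mem_range_self _ _)
        have e1 : (inner ℂ (R (R u)) u : ℂ) = inner ℂ (R u) (R u) := by
          have := ContinuousLinearMap.adjoint_inner_left R u (R u)
          rwa [hR_sa.adjoint_eq] at this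
        have hRu : R u = 0 := inner_self_eq_zero.mp (by rw [← e1]; exact h1)
        exact hRinj u hRu
      have htop : (LinearMap.range (R : H →ₗ[ℂ] H)).topologicalClosure = ⊤ := by
        rw [Submodule.topologicalClosure_eq_top_iff, horthbot]
      have hset : closure (Set.range (⇑R)) = Set.univ := by
        have := congrArg (fun (W : Submodule ℂ H) => (W : Set H)) htop
        simpa [Submodule.topologicalClosure_coe, LinearMap.coe_range] using this
      rw [dense_iff_closure_eq, hset]
    intro z
    have hclosed : IsClosed {z : H | T z ∈ M} :=
      IsClosed.preimage T.continuous (Submodule.isClosed_topologicalClosure _)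
    have hsub : Set.range (⇑R) ⊆ {z : H | T z ∈ M} := by
      rintro _ ⟨x, rfl⟩
      show T (R x) ∈ M
      have : T (R x) = R (adjoint (S ∘L A) x) := by
        rw [hTapp, hK]
        congr 1
        rw [ContinuousLinearMap.comp_apply, ← hR_sq]
        rfl
      rw [this]
      exact hcomplete x
    have : closure (Set.range (⇑R)) ⊆ {z : H | T z ∈ M} := closure_minimal hsub hclosed
    exact this (by rw [hdense.closure_eq]; trivial)
  -- A ∘ R kills Mᗮ
  have hARperp : ∀ y ∈ Mᗮ, A (R y) = 0 := by
    intro y hy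
    have hTy : T y = 0 := by
      have h1 : T y ∈ M := hTM y
      have h2 : T y ∈ Mᗮ := by
        rw [Submodule.mem_orthogonal]
        intro u hu
        have e1 : (inner ℂ u (T y) : ℂ) = inner ℂ (T u) y := by
          have := ContinuousLinearMap.adjoint_inner_right T u y
          rwa [hT_sa.adjoint_eq] at this
        rw [e1]
        rw [Submodule.mem_orthogonal] at hy
        exact hy (T u) (hTM u)
      have := Submodule.inner_right_of_mem_orthogonal h1 h2
      exact inner_self_eq_zero.mp this
    exact hRinj _ (by rw [← hTapp]; exact hTy)
  -- the finite-rank projections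
  obtain ⟨P, hPdef⟩ : ∃ P' : ℕ → (H →L[ℂ] H),
      P' = fun N => ∑ n ∈ Finset.range N, (innerSL ℂ (e n)).smulRight (e n) := ⟨_, rfl⟩
  have horth' := orthonormal_iff_ite.mp horth
  have hPapp : ∀ N x, P N x = ∑ n ∈ Finset.range N, (inner ℂ (e n) x : ℂ) • e n := by
    intro N x
    rw [hPdef]
    simp [ContinuousLinearMap.sum_apply]
  have hPinner : ∀ N x m, m ∈ Finset.range N → (inner ℂ (e m) (P N x) : ℂ) = inner ℂ (e m) x := by
    intro N x m hm
    rw [hPapp, inner_sum]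
    rw [Finset.sum_eq_single m]
    · rw [inner_smul_right, horth' m m]
      simp
    · intro n hn hne
      rw [inner_smul_right, horth' m n]
      simp [hne.symm]
    · intro h; exact absurd hm h
  have hP_sa : ∀ N, IsSelfAdjoint (P N) := by
    intro N
    show star (P N) = P N
    rw [hPdef, star_sum]
    refine Finset.sum_congr rfl fun n _ => ?_
    rw [ContinuousLinearMap.star_eq_adjoint, aux_adjoint_rank_one]
  have hPidem : ∀ N, (P N) ∘L (P N) = P N := by
    intro N
    ext x
    show P N (P N x) = P N x
    rw [hPapp N (P N x)]
    refine Eq.trans (Finset.sum_congr rfl fun n hn => ?_) (hPapp N x).symm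
    rw [hPinner N x n hn]
  have hPmem : ∀ N x, P N x ∈ M := by
    intro N x
    rw [hPapp]
    exact Submodule.sum_mem _ fun n _ => Submodule.smul_mem _ _ (heM n)
  have hPQ : ∀ N, (P N) ∘L Q = P N := by
    intro N
    ext x
    show P N (Q x) = P N x
    rw [hPapp N (Q x), hPapp N x]
    refine Finset.sum_congr rfl fun n _ => ?_
    congr 1
    have h0 : (inner ℂ (e n) (x - Q x) : ℂ) = 0 := by
      have := hQperp x
      rw [Submodule.mem_orthogonal] at this
      exact this _ (heM n)
    rw [inner_sub_right] at h0
    linear_combination -h0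
  have hQP : ∀ N, Q ∘L (P N) = P N := by
    intro N
    ext x
    exact hQeq _ (hPmem N x)
  have hQidem : Q ∘L Q = Q := by
    ext x
    exact hQeq _ (hQmem x)
  -- QN := Q - P N is a self-adjoint idempotent
  have hQN_sa : ∀ N, IsSelfAdjoint (Q - P N) := fun N => hQ_sa.sub (hP_sa N)
  have hQNidem : ∀ N, (Q - P N) ∘L (Q - P N) = Q - P N := by
    intro N
    rw [ContinuousLinearMap.sub_comp, ContinuousLinearMap.comp_sub,
      ContinuousLinearMap.comp_sub, hQidem, hQP, hPQ, hPidem]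
    abel
  have hQNnorm : ∀ N x, ‖(Q - P N) x‖ ≤ ‖x‖ :=
    fun N => aux_sa_idem_norm_le (hQN_sa N) (hQNidem N)
  -- strong convergence of P N to Q
  have hPtoQ : ∀ x, Tendsto (fun N => P N x) atTop (𝓝 (Q x)) := by
    intro x
    rw [Metric.tendsto_atTop]
    intro ε hε
    have hQxM : Q x ∈ closure ((Submodule.span ℂ (Set.range e) : Submodule ℂ H) : Set H) := by
      rw [← Submodule.topologicalClosure_coe]
      exact hQmem x
    obtain ⟨v, hv, hvd⟩ := Metric.mem_closure_iff.mp hQxM (ε / 3) (by linarith)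
    obtain ⟨c, hc⟩ := Finsupp.mem_span_range_iff_exists_finsupp.mp hv
    obtain ⟨N₀, hN₀⟩ := Finset.exists_nat_subset_range c.support
    refine ⟨N₀, fun N hN => ?_⟩
    have hsupp : c.support ⊆ Finset.range N :=
      hN₀.trans (Finset.range_subset_range.mpr hN)
    have hPv : P N v = v := by
      have hvsum : v = ∑ i ∈ c.support, c i • e i := by
        rw [← hc]; rfl
      have hinner : ∀ n, (inner ℂ (e n) v : ℂ) = c n := by
        intro n
        rw [hvsum, inner_sum]
        by_cases hns : n ∈ c.support
        · rw [Finset.sum_eq_single n]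
          · rw [inner_smul_right, horth' n n]; simp
          · intro m hm hmn
            rw [inner_smul_right, horth' n m]
            simp [hmn.symm]
          · intro h; exact absurd hns h
        · rw [Finsupp.notMem_support_iff.mp hns]
          rw [Finset.sum_eq_zero]
          intro m hm
          rw [inner_smul_right, horth' n m]
          have hnm : n ≠ m := by rintro rfl; exact hns hm
          simp [hnm]
      rw [hPapp]
      rw [Finset.sum_congr rfl fun n _ => by rw [hinner n]]
      rw [hvsum]
      exact (Finset.sum_subset hsupp fun n _ hn => by
        rw [Finsupp.notMem_support_iff.mp hn, zero_smul]).symm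
    have hPx : P N x = P N (Q x) := by
      conv_lhs => rw [show P N = (P N) ∘L Q from (hPQ N).symm]
      rfl
    have hsplit : P N x - Q x = P N (Q x - v) + (v - Q x) := by
      rw [hPx, map_sub, hPv]
      abel
    have hb1 : ‖P N (Q x - v)‖ ≤ ‖Q x - v‖ :=
      aux_sa_idem_norm_le (hP_sa N) (hPidem N) _
    have hdist : ‖Q x - v‖ < ε / 3 := by
      rw [← dist_eq_norm]; exact hvd
    rw [dist_eq_norm]
    calc ‖P N x - Q x‖ = ‖P N (Q x - v) + (v - Q x)‖ := by rw [hsplit]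
    _ ≤ ‖P N (Q x - v)‖ + ‖v - Q x‖ := norm_add_le _ _
    _ ≤ ‖Q x - v‖ + ‖v - Q x‖ := add_le_add hb1 le_rfl
    _ = ‖Q x - v‖ + ‖Q x - v‖ := by rw [norm_sub_rev v (Q x)]
    _ < ε := by linarith
  have hstrong : ∀ x, Tendsto (fun N => (Q - P N) x) atTop (𝓝 0) := by
    intro x
    have h := (tendsto_const_nhds (x := Q x) (f := atTop)).sub (hPtoQ x)
    rw [sub_self] at h
    simpa [ContinuousLinearMap.sub_apply] using h
  have hQNS : Tendsto (fun N => ‖(Q - P N) ∘L S‖) atTop (𝓝 0) :=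
    aux_compact_strong hS_compact (fun N => Q - P N) hQNnorm hstrong
  -- identity for the partial sums
  have hSN : ∀ N, (∑ n ∈ Finset.range N, (lam n : ℂ) • (innerSL ℂ (g n)).smulRight (f n))
      = (A ∘L R) ∘L ((P N) ∘L R) := by
    intro N
    ext x
    rw [show (((A ∘L R) ∘L ((P N) ∘L R)) x) = A (R (P N (R x))) from rfl]
    rw [ContinuousLinearMap.sum_apply, hPapp N (R x), map_sum, map_sum]
    refine Finset.sum_congr rfl fun n _ => ?_
    rw [map_smul, map_smul, hAe]
    simp only [ContinuousLinearMap.smul_apply, ContinuousLinearMap.smulRight_apply, innerSL_apply_apply]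
    have hgi : (inner ℂ (g n) x : ℂ) = inner ℂ (e n) (R x) := by
      rw [hge]
      have := ContinuousLinearMap.adjoint_inner_left R x (e n)
      rwa [hR_sa.adjoint_eq] at this
    rw [hgi, smul_comm]
  -- identity for K' = adjoint (S ∘L A)
  have hKid : adjoint (S ∘L A) = (A ∘L R) ∘L (Q ∘L R) := by
    rw [hK]
    ext x
    have h0 : A (R (R x - Q (R x))) = 0 := hARperp _ (hQperp (R x))
    rw [map_sub, map_sub, sub_eq_zero] at h0
    calc (A ∘L S) x = A (R (R x)) := by rw [ContinuousLinearMap.comp_apply, ← hR_sq]; rfl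
    _ = A (R (Q (R x))) := h0
    _ = ((A ∘L R) ∘L (Q ∘L R)) x := rfl
  -- the norm estimate
  have hbound : ∀ N, ‖(∑ n ∈ Finset.range N, (lam n : ℂ) • (innerSL ℂ (g n)).smulRight (f n))
      - adjoint (S ∘L A)‖ ≤ ‖A‖ * ‖(Q - P N) ∘L S‖ := by
    intro N
    rw [hSN, hKid]
    set W : H →L[ℂ] H := Q - P N with hW
    have hdiff : (A ∘L R) ∘L ((P N) ∘L R) - (A ∘L R) ∘L (Q ∘L R)
        = -((A * (R * W)) * (W * R)) := by
      have h1 : (A ∘L R) ∘L ((P N) ∘L R) - (A ∘L R) ∘L (Q ∘L R) = -((A ∘L R) ∘L (W ∘L R)) := by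
        rw [hW, ContinuousLinearMap.sub_comp, ContinuousLinearMap.comp_sub]
        abel
      rw [h1]
      congr 1
      have h2 : W ∘L R = W ∘L (W ∘L R) := by
        rw [← ContinuousLinearMap.comp_assoc, hQNidem]
      calc (A ∘L R) ∘L (W ∘L R) = (A ∘L R) ∘L (W ∘L (W ∘L R)) := by rw [← h2]
      _ = (A * (R * W)) * (W * R) := by ext x; rfl
    rw [hdiff, norm_neg]
    have hWR : ‖R * W‖ = ‖W * R‖ := by
      have hst : star (W * R) = R * W := by
        rw [star_mul, hR_sa.star_eq, (hQN_sa N).star_eq]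
      rw [← hst, norm_star]
    have hcstar : ‖W * R‖ * ‖W * R‖ = ‖(W * R) * star (W * R)‖ :=
      (CStarRing.norm_self_mul_star (x := W * R)).symm
    have hWSW : (W * R) * star (W * R) = (W * S) * W := by
      rw [star_mul, hR_sa.star_eq, (hQN_sa N).star_eq]
      have hRR : R * R = S := hR_sq
      rw [mul_assoc, ← mul_assoc R R W, hRR, ← mul_assoc]
    have hWle : ‖W‖ ≤ 1 := by
      refine ContinuousLinearMap.opNorm_le_bound _ zero_le_one fun x => ?_
      rw [one_mul]
      exact hQNnorm N x
    have h4 : ‖(A * (R * W)) * (W * R)‖ ≤ ‖A‖ * ‖R * W‖ * ‖W * R‖ := by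
      calc ‖(A * (R * W)) * (W * R)‖ ≤ ‖A * (R * W)‖ * ‖W * R‖ := norm_mul_le _ _
      _ ≤ ‖A‖ * ‖R * W‖ * ‖W * R‖ := by
        have hAB := norm_mul_le A (R * W)
        have hnn : (0:ℝ) ≤ ‖W * R‖ := norm_nonneg _
        nlinarith
    have h6 : ‖(W * S) * W‖ ≤ ‖W * S‖ := by
      have h3 : ‖(W * S) * W‖ ≤ ‖W * S‖ * ‖W‖ := norm_mul_le _ _
      exact h3.trans (mul_le_of_le_one_right (norm_nonneg _) hWle)
    calc ‖(A * (R * W)) * (W * R)‖ ≤ ‖A‖ * ‖R * W‖ * ‖W * R‖ := h4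
    _ = ‖A‖ * (‖W * R‖ * ‖W * R‖) := by rw [hWR]; ring
    _ = ‖A‖ * ‖(W * R) * star (W * R)‖ := by rw [hcstar]
    _ = ‖A‖ * ‖(W * S) * W‖ := by rw [hWSW]
    _ ≤ ‖A‖ * ‖W * S‖ := mul_le_mul_of_nonneg_left h6 (norm_nonneg A)
    _ = ‖A‖ * ‖W ∘L S‖ := by rw [ContinuousLinearMap.mul_def]
  -- second convergence
  have h2 : Tendsto (fun N => ∑ n ∈ Finset.range N,
      (lam n : ℂ) • (innerSL ℂ (g n)).smulRight (f n)) atTop (𝓝 (adjoint (S ∘L A))) := by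
    rw [tendsto_iff_norm_sub_tendsto_zero]
    refine squeeze_zero (fun N => norm_nonneg _) hbound ?_
    have h0 := hQNS.const_mul ‖A‖
    rw [mul_zero] at h0
    exact h0
  refine ⟨?_, h2⟩
  -- first convergence via adjoints
  have hadj : ∀ N, adjoint (∑ n ∈ Finset.range N, (lam n : ℂ) • (innerSL ℂ (g n)).smulRight (f n))
      = ∑ n ∈ Finset.range N, (lam n : ℂ) • (innerSL ℂ (f n)).smulRight (g n) := by
    intro N
    rw [← ContinuousLinearMap.star_eq_adjoint, star_sum]
    refine Finset.sum_congr rfl fun n _ => ?_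
    rw [star_smul, ContinuousLinearMap.star_eq_adjoint, aux_adjoint_rank_one]
    congr 1
    simp [Complex.star_def, Complex.conj_ofReal]
  have hbound' : ∀ N, ‖(∑ n ∈ Finset.range N, (lam n : ℂ) • (innerSL ℂ (f n)).smulRight (g n))
      - (S ∘L A)‖ ≤ ‖A‖ * ‖(Q - P N) ∘L S‖ := by
    intro N
    have e1 : (∑ n ∈ Finset.range N, (lam n : ℂ) • (innerSL ℂ (f n)).smulRight (g n))
        - (S ∘L A)
        = star ((∑ n ∈ Finset.range N, (lam n : ℂ) • (innerSL ℂ (g n)).smulRight (f n))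
            - adjoint (S ∘L A)) := by
      rw [star_sub]
      rw [ContinuousLinearMap.star_eq_adjoint, hadj]
      rw [ContinuousLinearMap.star_eq_adjoint, ContinuousLinearMap.adjoint_adjoint]
    rw [e1, norm_star]
    exact hbound N
  rw [tendsto_iff_norm_sub_tendsto_zero]
  refine squeeze_zero (fun N => norm_nonneg _) hbound' ?_
  have h0 := hQNS.const_mul ‖A‖
  rw [mul_zero] at h0
  exact h0
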